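/- Let n be a positive integer, let X and Y be real symmetric n×n matrices with Y positive definite, let K = Y^{-1/2} [−(X+iY), Iₙ], and let V_p = (1/2)[[Y⁻¹, Y⁻¹X],[XY⁻¹, XY⁻¹X + Y]] be the 2n×2n real block matrix. Then Σ · Re(K†K) · Σᵀ = 2 V_p, where Σ = [[0, Iₙ],[−Iₙ, 0]]. -/

import Mathlib

/-!
STATEMENT 1: With K = Y^{-1/2}·[−(X+iY), Iₙ] and V_p the pure-Gaussian covariance
matrix parametrized by {X, Y}, one has Σ · Re(K†K) · Σᵀ = 2·V_p.
-/

open Matrix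

noncomputable section

/-- The 2n×2n symplectic form Σ = [[0, Iₙ],[−Iₙ, 0]]. -/
def sympJ (n : ℕ) : Matrix (Fin n ⊕ Fin n) (Fin n ⊕ Fin n) ℝ :=
  Matrix.fromBlocks 0 1 (-1) 0

/-- The positive semidefinite square root of a positive semidefinite matrix, as
`Matrix.PosSemidef.sqrt` was defined in Mathlib (Dec 2024). -/
def posSemidefSqrt {n : Type*} [Fintype n] [DecidableEq n] {A : Matrix n n ℝ}
    (hA : A.PosSemidef) : Matrix n n ℝ :=
  hA.1.eigenvectorUnitary.1 * diagonal ((↑) ∘ (Real.sqrt ·) ∘ hA.1.eigenvalues) *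
    (star hA.1.eigenvectorUnitary : Matrix n n ℝ)

/-- The coupling matrix K = Y^{-1/2}·[−(X+iY), Iₙ], where Y^{-1/2} is the inverse of
the positive-definite square root of Y. -/
def couplingK {n : ℕ} (X Y : Matrix (Fin n) (Fin n) ℝ) (hY : Y.PosDef) :
    Matrix (Fin n) (Fin n ⊕ Fin n) ℂ :=
  ((posSemidefSqrt hY.posSemidef)⁻¹).map Complex.ofReal *
    Matrix.fromCols (-(X.map Complex.ofReal + Complex.I • Y.map Complex.ofReal)) 1

/-- The covariance matrix V_p = (1/2)·[[Y⁻¹, Y⁻¹X],[XY⁻¹, XY⁻¹X + Y]] of the n-mode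
pure Gaussian state parametrized by {X, Y}. -/
def pureCov {n : ℕ} (X Y : Matrix (Fin n) (Fin n) ℝ) :
    Matrix (Fin n ⊕ Fin n) (Fin n ⊕ Fin n) ℝ :=
  (1/2 : ℝ) • Matrix.fromBlocks Y⁻¹ (Y⁻¹ * X) (X * Y⁻¹) (X * Y⁻¹ * X + Y)

section Aux

lemma posSemidefSqrt_transpose {n : Type*} [Fintype n] [DecidableEq n] {A : Matrix n n ℝ}
    (hA : A.PosSemidef) : (posSemidefSqrt hA)ᵀ = posSemidefSqrt hA := by
  rw [← Matrix.conjTranspose_eq_transpose_of_trivial]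
  simp only [posSemidefSqrt, Matrix.conjTranspose_mul, Matrix.diagonal_conjTranspose,
    Matrix.star_eq_conjTranspose, Matrix.conjTranspose_conjTranspose, Matrix.mul_assoc]
  congr 2

lemma posSemidefSqrt_mul_self {n : Type*} [Fintype n] [DecidableEq n] {A : Matrix n n ℝ}
    (hA : A.PosSemidef) : posSemidefSqrt hA * posSemidefSqrt hA = A := by
  have hU := Matrix.UnitaryGroup.star_mul_self hA.1.eigenvectorUnitary
  have hD : diagonal ((↑) ∘ (Real.sqrt ·) ∘ hA.1.eigenvalues) *
      diagonal ((↑) ∘ (Real.sqrt ·) ∘ hA.1.eigenvalues) =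
      diagonal (RCLike.ofReal ∘ hA.1.eigenvalues : n → ℝ) := by
    rw [diagonal_mul_diagonal]
    congr 1; ext i
    simp [Real.mul_self_sqrt (hA.eigenvalues_nonneg i)]
  conv_rhs => rw [hA.1.spectral_theorem]
  simp only [posSemidefSqrt, Matrix.mul_assoc]
  rw [← Matrix.mul_assoc (star _ : Matrix n n ℝ) _ _, hU, Matrix.one_mul,
    ← Matrix.mul_assoc (diagonal _) (diagonal _), hD]
  simp [Unitary.conjStarAlgAut_apply, Matrix.mul_assoc]


variable {m m' p : Type*} [Fintype m']

lemma mapC_mul (P : Matrix m m' ℝ) (Q : Matrix m' p ℝ) :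
    (P * Q).map Complex.ofReal = P.map Complex.ofReal * Q.map Complex.ofReal := by
  ext i j
  simp [Matrix.mul_apply, Matrix.map_apply]

lemma mapC_add (P Q : Matrix m m' ℝ) :
    (P + Q).map Complex.ofReal = P.map Complex.ofReal + Q.map Complex.ofReal := by
  ext i j; simp

lemma mapC_neg (P : Matrix m m' ℝ) :
    (-P).map Complex.ofReal = -(P.map Complex.ofReal) := by
  ext i j; simp

lemma ctMapC (P : Matrix m m' ℝ) :
    (P.map Complex.ofReal)ᴴ = Pᵀ.map Complex.ofReal := by
  ext i j
  simp [Matrix.conjTranspose_apply, Matrix.map_apply, Complex.conj_ofReal]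

lemma mapRe_add_I_smul (P Q : Matrix m m' ℝ) :
    ((P.map Complex.ofReal) + Complex.I • (Q.map Complex.ofReal)).map Complex.re = P := by
  ext i j
  simp [Matrix.map_apply, Complex.add_re, Complex.mul_re]

end Aux

theorem symp_re_KdagK_symp_eq_two_cov
    (n : ℕ) (hn : 0 < n) (X Y : Matrix (Fin n) (Fin n) ℝ)
    (hX : X.IsSymm) (hYs : Y.IsSymm) (hY : Y.PosDef) :
    sympJ n * ((couplingK X Y hY)ᴴ * couplingK X Y hY).map Complex.re * (sympJ n)ᵀ =
      (2 : ℝ) • pureCov X Y := by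
  classical
  set S := posSemidefSqrt hY.posSemidef with hSdef
  have hdet : IsUnit Y.det := isUnit_iff_ne_zero.mpr hY.det_pos.ne'
  have hYinv : Y⁻¹ * Y = 1 := Matrix.nonsing_inv_mul Y hdet
  have hYinv' : Y * Y⁻¹ = 1 := Matrix.mul_nonsing_inv Y hdet
  have hSherm : Sᵀ = S := by
    exact posSemidefSqrt_transpose hY.posSemidef
  have hSinvT : (S⁻¹)ᵀ = S⁻¹ := by rw [Matrix.transpose_nonsing_inv, hSherm]
  have hSinv : S⁻¹ * S⁻¹ = Y⁻¹ := by
    rw [← Matrix.mul_inv_rev, posSemidefSqrt_mul_self]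
  set Xc := X.map Complex.ofReal with hXc
  set Yc := Y.map Complex.ofReal with hYc
  set Wc := (Y⁻¹).map Complex.ofReal with hWc
  set Sc := (S⁻¹).map Complex.ofReal with hSc
  have hXcH : Xcᴴ = Xc := by rw [hXc, ctMapC, hX.eq]
  have hYcH : Ycᴴ = Yc := by rw [hYc, ctMapC, hYs.eq]
  have hScH : Scᴴ = Sc := by rw [hSc, ctMapC, hSinvT]
  have hScSc : Sc * Sc = Wc := by rw [hSc, hWc, ← mapC_mul, hSinv]
  -- the conjugate transpose of the column block
  have hA : (-(Xc + Complex.I • Yc))ᴴ = -(Xc - Complex.I • Yc) := by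
    rw [Matrix.conjTranspose_neg, Matrix.conjTranspose_add, Matrix.conjTranspose_smul,
      hXcH, hYcH, Complex.star_def, Complex.conj_I, neg_smul, ← sub_eq_add_neg]
  -- useful multiplicative identities
  have e1 : Xc * Wc * Yc = Xc := by
    rw [hXc, hWc, hYc, ← mapC_mul, ← mapC_mul, mul_assoc, hYinv, mul_one]
  have e2 : Yc * Wc * Xc = Xc := by
    rw [hXc, hWc, hYc, ← mapC_mul, ← mapC_mul, hYinv', one_mul]
  have e3 : Yc * Wc * Yc = Yc := by
    rw [hWc, hYc, ← mapC_mul, ← mapC_mul, hYinv', one_mul]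
  have e4 : Xc * Wc * Xc = (X * Y⁻¹ * X).map Complex.ofReal := by
    rw [hXc, hWc, ← mapC_mul, ← mapC_mul]
  -- the Gram matrix K† K as a block matrix
  have hK : (couplingK X Y hY)ᴴ * couplingK X Y hY =
      Matrix.fromBlocks
        ((Xc - Complex.I • Yc) * Wc * (Xc + Complex.I • Yc))
        (-((Xc - Complex.I • Yc) * Wc))
        (-(Wc * (Xc + Complex.I • Yc))) Wc := by
    have assoc : ∀ (a : Matrix (Fin n ⊕ Fin n) (Fin n) ℂ) (b c : Matrix (Fin n) (Fin n) ℂ)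
        (d : Matrix (Fin n) (Fin n ⊕ Fin n) ℂ), a * b * (c * d) = a * (b * c) * d := by
      intro a b c d
      rw [Matrix.mul_assoc a b (c * d), ← Matrix.mul_assoc b c d, ← Matrix.mul_assoc a (b * c) d]
    rw [couplingK, Matrix.conjTranspose_mul,
      Matrix.conjTranspose_fromCols_eq_fromRows_conjTranspose, hA,
      Matrix.conjTranspose_one, hScH, ← hXc, ← hYc, ← hSc, assoc, hScSc,
      Matrix.fromRows_mul, Matrix.fromRows_mul_fromCols]
    simp only [Matrix.neg_mul, Matrix.mul_neg, neg_neg, Matrix.mul_one, Matrix.one_mul]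
  -- identify the real parts of the blocks
  have h11 : (Xc - Complex.I • Yc) * Wc * (Xc + Complex.I • Yc) =
      ((X * Y⁻¹ * X + Y).map Complex.ofReal) +
        Complex.I • ((0 : Matrix (Fin n) (Fin n) ℝ).map Complex.ofReal) := by
    simp only [sub_mul, mul_add, Matrix.smul_mul, Matrix.mul_smul, smul_sub, smul_smul,
      Complex.I_mul_I, e1, e2, e3, e4, mapC_add, Matrix.map_zero, Complex.ofReal_zero,
      smul_zero, add_zero, neg_one_smul]
    rw [hYc]
    abel
  have h12 : -((Xc - Complex.I • Yc) * Wc) =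
      ((-(X * Y⁻¹)).map Complex.ofReal) +
        Complex.I • ((1 : Matrix (Fin n) (Fin n) ℝ).map Complex.ofReal) := by
    have hYW : Yc * Wc = (1 : Matrix (Fin n) (Fin n) ℝ).map Complex.ofReal := by
      rw [hYc, hWc, ← mapC_mul, hYinv']
    rw [sub_mul, Matrix.smul_mul, hYW, mapC_neg, hXc, hWc, ← mapC_mul]
    abel
  have h21 : -(Wc * (Xc + Complex.I • Yc)) =
      ((-(Y⁻¹ * X)).map Complex.ofReal) +
        Complex.I • ((-(Y⁻¹ * Y)).map Complex.ofReal) := by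
    have hWY : Wc * Yc = (Y⁻¹ * Y).map Complex.ofReal := by
      rw [hYc, hWc, ← mapC_mul]
    rw [mul_add, Matrix.mul_smul, hWY, mapC_neg, mapC_neg, hXc, hWc, ← mapC_mul,
      neg_add, ← smul_neg]
  have h22 : Wc = ((Y⁻¹).map Complex.ofReal) +
      Complex.I • ((0 : Matrix (Fin n) (Fin n) ℝ).map Complex.ofReal) := by
    simp [hWc]
  -- take real parts
  have hRe : ((couplingK X Y hY)ᴴ * couplingK X Y hY).map Complex.re =
      Matrix.fromBlocks (X * Y⁻¹ * X + Y) (-(X * Y⁻¹)) (-(Y⁻¹ * X)) Y⁻¹ := by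
    rw [hK, h11, h12, h21, h22, Matrix.fromBlocks_map,
      mapRe_add_I_smul, mapRe_add_I_smul, mapRe_add_I_smul, mapRe_add_I_smul]
  rw [hRe]
  -- conjugate by the symplectic form
  have hJT : (sympJ n)ᵀ = Matrix.fromBlocks 0 (-1) 1 0 := by
    simp [sympJ, Matrix.fromBlocks_transpose]
  rw [hJT, sympJ, pureCov, Matrix.fromBlocks_multiply, Matrix.fromBlocks_multiply,
    smul_smul]
  norm_num [Matrix.fromBlocks_smul]
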